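/- Let B, P₀, P₁ ∈ ℂ with P₀ ≠ P₁ and B, P₀, P₁ collinear. If Q₀, Q₁ ∈ ℂ satisfy |Q₀ − B| = |P₀ − B|, |Q₁ − B| = |P₁ − B| and |Q₁ − Q₀| = |P₁ − P₀|, then there exists a ∈ ℂ with |a| = 1 such that Qᵢ − B = a·(Pᵢ − B) for i = 0, 1; i.e. the pair (Q₀, Q₁) is obtained from (P₀, P₁) by a rotation about B, and the reflection ambiguity of the generic two-measurement case disappears. -/

import Mathlib

/-- When the two measurement points are collinear with the anchor (diameter case),
the reflection ambiguity disappears: any compatible pair of points is obtained by a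
rotation about the anchor. -/
theorem diameter_case_only_rotation (B P0 P1 Q0 Q1 : ℂ)
    (hne : P0 ≠ P1) (hcol : Collinear ℝ ({B, P0, P1} : Set ℂ))
    (h0 : ‖Q0 - B‖ = ‖P0 - B‖)
    (h1 : ‖Q1 - B‖ = ‖P1 - B‖)
    (h01 : ‖Q1 - Q0‖ = ‖P1 - P0‖) :
    ∃ a : ℂ, ‖a‖ = 1 ∧ Q0 - B = a * (P0 - B) ∧ Q1 - B = a * (P1 - B) := by
  by_cases hP0B : P0 = B
  · have hq0 : Q0 - B = 0 := by
      have h : ‖Q0 - B‖ = 0 := by rw [h0, hP0B]; simp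
      simpa [sub_eq_zero] using h
    have hP1B : P1 - B ≠ 0 := by
      rw [hP0B] at hne
      exact sub_ne_zero.mpr (Ne.symm hne)
    refine ⟨(Q1 - B) / (P1 - B), ?_, ?_, ?_⟩
    · rw [norm_div, h1, div_self (norm_ne_zero_iff.mpr hP1B)]
    · rw [hq0, hP0B]; simp
    · rw [div_mul_cancel₀ _ hP1B]
  · obtain ⟨v, hv⟩ := (collinear_iff_of_mem (show B ∈ ({B, P0, P1} : Set ℂ) by simp)).mp hcol
    obtain ⟨r0, hr0⟩ := hv P0 (by simp)
    obtain ⟨r1, hr1⟩ := hv P1 (by simp)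
    have hp0 : P0 - B = (r0 : ℂ) * v := by
      rw [hr0, vadd_eq_add, Complex.real_smul]; ring
    have hp1 : P1 - B = (r1 : ℂ) * v := by
      rw [hr1, vadd_eq_add, Complex.real_smul]; ring
    have hp0ne : P0 - B ≠ 0 := sub_ne_zero.mpr hP0B
    have hr0ne : (r0 : ℂ) ≠ 0 := fun h => hp0ne (by rw [hp0, h, zero_mul])
    set t : ℝ := r1 / r0 with ht
    have hp1' : P1 - B = (t : ℂ) * (P0 - B) := by
      rw [hp0, hp1]; push_cast [ht]; field_simp
    set p := P0 - B
    set q0 := Q0 - B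
    set q1 := Q1 - B
    have hq0ne : q0 ≠ 0 := fun h => by
      rw [h] at h0; exact hp0ne (by simpa using h0.symm)
    have hn0 : Complex.normSq q0 = Complex.normSq p := by
      rw [← Complex.sq_norm, ← Complex.sq_norm, h0]
    have hn1 : Complex.normSq q1 = t ^ 2 * Complex.normSq p := by
      rw [← Complex.sq_norm, ← Complex.sq_norm, h1, hp1', norm_mul, Complex.norm_real, Real.norm_eq_abs,
        mul_pow, sq_abs]
    have hq1q0 : q1 - q0 = (Q1 - Q0) := by simp only [q0, q1]; ring
    have hp1p0 : ((t : ℂ) * p - p) = (P1 - P0) := by rw [← hp1']; simp only [p]; ring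
    have hns : Complex.normSq (q1 - q0) = Complex.normSq ((t : ℂ) * p - p) := by
      rw [hq1q0, hp1p0, ← Complex.sq_norm, ← Complex.sq_norm, h01]
    have key : (q1 * starRingEnd ℂ q0).re = t * Complex.normSq p := by
      have e1 := Complex.normSq_sub q1 q0
      have e2 := Complex.normSq_sub ((t : ℂ) * p) p
      have e3 : ((t : ℂ) * p * starRingEnd ℂ p).re = t * Complex.normSq p := by
        rw [mul_assoc, Complex.mul_conj]
        simp
      have e4 : Complex.normSq ((t : ℂ) * p) = t ^ 2 * Complex.normSq p := by
        rw [Complex.normSq_mul, Complex.normSq_ofReal]; ring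
      rw [e1, e2, e3, e4, hn0, hn1] at hns
      linarith
    have habsz : ‖q1 * starRingEnd ℂ q0‖ = |t| * Complex.normSq p := by
      rw [norm_mul, Complex.norm_conj, h0, h1, hp1', norm_mul, Complex.norm_real, Real.norm_eq_abs,
        ← Complex.sq_norm]
      ring
    have hsq := Complex.sq_norm (q1 * starRingEnd ℂ q0)
    rw [Complex.normSq_apply] at hsq; rw [habsz] at hsq
    have e5 : (q1 * starRingEnd ℂ q0).re ^ 2 = t ^ 2 * Complex.normSq p ^ 2 := by
      rw [key]; ring
    have e6 : (|t| * Complex.normSq p) ^ 2 = t ^ 2 * Complex.normSq p ^ 2 := by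
      rw [mul_pow, sq_abs]
    have him : (q1 * starRingEnd ℂ q0).im = 0 := by
      have h2 : (q1 * starRingEnd ℂ q0).im ^ 2 = 0 := by nlinarith [hsq, e5, e6]
      exact pow_eq_zero_iff (two_ne_zero) |>.mp h2
    have hz : q1 * starRingEnd ℂ q0 = ((t * Complex.normSq p : ℝ) : ℂ) := by
      apply Complex.ext
      · simpa using key
      · simpa using him
    have hq1 : q1 = (t : ℂ) * q0 := by
      have h2 : q1 * starRingEnd ℂ q0 = (t : ℂ) * q0 * starRingEnd ℂ q0 := by
        rw [hz, mul_assoc, Complex.mul_conj, hn0]; push_cast; ring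
      have := mul_right_cancel₀ (star_ne_zero.mpr hq0ne) h2
      simpa using this
    refine ⟨q0 / p, ?_, ?_, ?_⟩
    · rw [norm_div, h0, div_self (norm_ne_zero_iff.mpr hp0ne)]
    · rw [div_mul_cancel₀ _ hp0ne]
    · rw [hp1', hq1]; field_simp
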